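/- Let f : (0,1) → ℂ be continuous with ∫₀¹ |f(t)| dt < ∞, and suppose t ↦ t(1-t)f(t) is differentiable with t(1-t)f(t) → 0 as t → 0⁺ and t → 1⁻, and t ↦ t(1-t)f'(t) integrable. Then for z ∉ [0,1], z(1-z) d/dz ∫₀¹ f(t)/(t-z) dt = −∫₀¹ f(t) dt + ∫₀¹ t(1-t)f'(t)/(t-z) dt. -/

import Mathlib

open MeasureTheory intervalIntegral
open Set Filter Metric

set_option maxHeartbeats 1000000

/-- For a continuous integrable `f` on `(0,1)` with `t(1-t)f(t) → 0` at both endpoints and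
`t(1-t)f'(t)` integrable, the Cauchy transform `F(z) = ∫₀¹ f(t)/(t-z) dt` satisfies, for
`z ∉ [0,1]`,  `z(1-z)F'(z) = −∫₀¹ f(t) dt + ∫₀¹ t(1-t)f'(t)/(t-z) dt`. -/
theorem stmt10 (f : ℝ → ℂ)
    (hfc : ContinuousOn f (Set.Ioo 0 1))
    (hfint : IntervalIntegrable f volume 0 1)
    (hfdiff : ∀ t ∈ Set.Ioo (0 : ℝ) 1, DifferentiableAt ℝ f t)
    (hlim0 : Filter.Tendsto (fun t : ℝ => (↑(t * (1 - t)) : ℂ) * f t)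
      (nhdsWithin 0 (Set.Ioi 0)) (nhds 0))
    (hlim1 : Filter.Tendsto (fun t : ℝ => (↑(t * (1 - t)) : ℂ) * f t)
      (nhdsWithin 1 (Set.Iio 1)) (nhds 0))
    (hfint' : IntervalIntegrable (fun t : ℝ => (↑(t * (1 - t)) : ℂ) * deriv f t) volume 0 1)
    (z : ℂ) (hz : ∀ t ∈ Set.Icc (0 : ℝ) 1, (t : ℂ) ≠ z) :
    z * (1 - z) * deriv (fun w : ℂ => ∫ t in (0 : ℝ)..1, f t / ((t : ℂ) - w)) z =
      -(∫ t in (0 : ℝ)..1, f t) +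
        ∫ t in (0 : ℝ)..1, (↑(t * (1 - t)) : ℂ) * deriv f t / ((t : ℂ) - z) := by
  have hne : ∀ t ∈ Set.Icc (0:ℝ) 1, ((t:ℂ) - z) ≠ 0 := fun t ht => sub_ne_zero.2 (hz t ht)
  have huIcc : Set.uIcc (0:ℝ) 1 = Set.Icc 0 1 := Set.uIcc_of_le zero_le_one
  have hIoc : Set.uIoc (0:ℝ) 1 = Set.Ioc 0 1 := Set.uIoc_of_le zero_le_one
  have hcsub : Continuous fun t : ℝ => (t:ℂ) - z := Complex.continuous_ofReal.sub continuous_const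
  have hcinv : ContinuousOn (fun t : ℝ => ((t:ℂ) - z)⁻¹) (Set.Icc 0 1) :=
    ContinuousOn.inv₀ hcsub.continuousOn hne
  have hcinv2 : ContinuousOn (fun t : ℝ => (((t:ℂ) - z)^2)⁻¹) (Set.Icc 0 1) :=
    ContinuousOn.inv₀ (hcsub.continuousOn.pow 2) (fun t ht => pow_ne_zero 2 (hne t ht))
  obtain ⟨t0, ht0, hmin⟩ := isCompact_Icc.exists_isMinOn (Set.nonempty_Icc.2 zero_le_one)
    ((continuous_norm.comp hcsub).continuousOn)
  set ε := ‖((t0:ℂ) - z)‖ with hεdef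
  have hε0 : 0 < ε := norm_pos_iff.mpr (hne t0 ht0)
  have hεle : ∀ t ∈ Set.Icc (0:ℝ) 1, ε ≤ ‖((t:ℂ) - z)‖ :=
    fun t ht => isMinOn_iff.1 hmin t ht
  have hball : ∀ w ∈ Metric.ball z (ε/2), ∀ t ∈ Set.Icc (0:ℝ) 1,
      ε/2 ≤ ‖((t:ℂ) - w)‖ := by
    intro w hw t ht
    have h1 : ‖((t:ℂ) - z)‖ ≤ ‖((t:ℂ) - w)‖ + ‖(w - z)‖ := by
      simpa using norm_sub_le_norm_sub_add_norm_sub ((t:ℂ)) w z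
    have h2 : ‖(w - z)‖ < ε/2 := by
      simpa [Complex.dist_eq] using hw
    have := hεle t ht
    linarith
  have hmem : ∀ t ∈ Set.uIoc (0:ℝ) 1, t ∈ Set.Icc (0:ℝ) 1 := by
    intro t ht; rw [hIoc] at ht; exact Set.Ioc_subset_Icc_self ht
  have hfm : AEStronglyMeasurable f (volume.restrict (Set.uIoc (0:ℝ) 1)) := by
    rw [hIoc]; exact hfint.1.aestronglyMeasurable
  -- Step A: derivative under the integral sign
  have harg1 : ∀ᶠ w in nhds z, AEStronglyMeasurable (fun t : ℝ => f t / ((t:ℂ) - w))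
      (volume.restrict (Set.uIoc (0:ℝ) 1)) := by
    refine Filter.Eventually.of_forall (fun w => ?_)
    simp only [div_eq_mul_inv]
    exact hfm.mul
      (((Complex.continuous_ofReal.sub continuous_const).measurable.inv).aestronglyMeasurable)
  have harg2 : IntervalIntegrable (fun t : ℝ => f t / ((t:ℂ) - z)) volume 0 1 := by
    have := hfint.mul_continuousOn (by rw [huIcc]; exact hcinv)
    simpa [div_eq_mul_inv] using this
  have harg3 : AEStronglyMeasurable (fun t : ℝ => f t / ((t:ℂ) - z)^2)
      (volume.restrict (Set.uIoc (0:ℝ) 1)) := by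
    simp only [div_eq_mul_inv]
    exact hfm.mul
      ((((Complex.continuous_ofReal.sub continuous_const).pow 2).measurable.inv).aestronglyMeasurable)
  have harg4 : ∀ᵐ t ∂(volume : Measure ℝ), t ∈ Set.uIoc (0:ℝ) 1 →
      ∀ x ∈ Metric.ball z (ε/2), ‖f t / ((t:ℂ) - x)^2‖ ≤ ‖f t‖ * ((ε/2)^2)⁻¹ := by
    refine Filter.Eventually.of_forall (fun t ht x hx => ?_)
    have hd := hball x hx t (hmem t ht)
    have h0 : (0:ℝ) < (ε/2)^2 := by positivity
    have h2 : (ε/2)^2 ≤ ‖((t:ℂ)-x)‖^2 :=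
      pow_le_pow_left₀ (le_of_lt (half_pos hε0)) hd 2
    rw [norm_div, norm_pow, div_eq_mul_inv]
    exact mul_le_mul_of_nonneg_left (inv_anti₀ h0 h2) (norm_nonneg _)
  have harg5 : IntervalIntegrable (fun t : ℝ => ‖f t‖ * ((ε/2)^2)⁻¹) volume 0 1 :=
    hfint.norm.mul_const _
  have harg6 : ∀ᵐ t ∂(volume : Measure ℝ), t ∈ Set.uIoc (0:ℝ) 1 →
      ∀ x ∈ Metric.ball z (ε/2),
        HasDerivAt (fun w : ℂ => f t / ((t:ℂ) - w)) (f t / ((t:ℂ) - x)^2) x := by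
    refine Filter.Eventually.of_forall (fun t ht x hx => ?_)
    have hd := hball x hx t (hmem t ht)
    have hne' : ((t:ℂ) - x) ≠ 0 := by
      intro h
      rw [h] at hd; simp at hd; linarith [half_pos hε0]
    have h1 : HasDerivAt (fun y : ℂ => (t:ℂ) - y) (-1) x := (hasDerivAt_id x).const_sub _
    have H : HasDerivAt (fun y : ℂ => ((t:ℂ) - y)⁻¹) ((((t:ℂ)-x)^2)⁻¹) x := by
      simpa [one_div] using (show HasDerivAt (fun y : ℂ => ((t:ℂ) - y)⁻¹) _ x from h1.inv hne')
    have := H.const_mul (f t)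
    simpa [div_eq_mul_inv] using this
  have stepA : HasDerivAt (fun w : ℂ => ∫ t in (0:ℝ)..1, f t / ((t:ℂ) - w))
        (∫ t in (0:ℝ)..1, f t / ((t:ℂ) - z)^2) z ∧
      IntervalIntegrable (fun t : ℝ => f t / ((t:ℂ) - z)^2) volume 0 1 := by
    have h := intervalIntegral.hasDerivAt_integral_of_dominated_loc_of_deriv_le
      (F := fun (w : ℂ) (t : ℝ) => f t / ((t:ℂ) - w))
      (F' := fun (w : ℂ) (t : ℝ) => f t / ((t:ℂ) - w)^2)
      (Metric.ball_mem_nhds z (half_pos hε0)) harg1 harg2 harg3 harg4 harg5 harg6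
    exact ⟨h.2, h.1⟩
  -- Step B: integration by parts
  have hc1 : ContinuousOn (fun t : ℝ => ((1:ℂ)-2*(t:ℂ)) * ((t:ℂ)-z)⁻¹) (Set.uIcc 0 1) := by
    rw [huIcc]
    exact ((continuous_const.sub (continuous_const.mul
      Complex.continuous_ofReal)).continuousOn).mul hcinv
  have hc2 : ContinuousOn (fun t : ℝ => ((t:ℂ)-z)⁻¹) (Set.uIcc 0 1) := by
    rw [huIcc]; exact hcinv
  have hc3 : ContinuousOn (fun t : ℝ => (↑(t*(1-t)):ℂ) * (((t:ℂ)-z)^2)⁻¹) (Set.uIcc 0 1) := by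
    rw [huIcc]
    exact ((Complex.continuous_ofReal.comp
      (continuous_id.mul (continuous_const.sub continuous_id))).continuousOn).mul hcinv2
  have hi1 : IntervalIntegrable (fun t : ℝ => f t * (((1:ℂ)-2*(t:ℂ)) * ((t:ℂ)-z)⁻¹)) volume 0 1 :=
    hfint.mul_continuousOn hc1
  have hi2 : IntervalIntegrable (fun t : ℝ => (↑(t*(1-t)):ℂ) * deriv f t * ((t:ℂ)-z)⁻¹) volume 0 1 :=
    hfint'.mul_continuousOn hc2
  have hi3 : IntervalIntegrable (fun t : ℝ => f t * ((↑(t*(1-t)):ℂ) * (((t:ℂ)-z)^2)⁻¹)) volume 0 1 :=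
    hfint.mul_continuousOn hc3
  have hgderiv : ∀ t ∈ Set.Ioo (0:ℝ) 1, HasDerivAt
      (fun t : ℝ => (↑(t*(1-t)):ℂ) * f t * ((t:ℂ)-z)⁻¹)
      (f t * (((1:ℂ)-2*(t:ℂ)) * ((t:ℂ)-z)⁻¹)
        + (↑(t*(1-t)):ℂ) * deriv f t * ((t:ℂ)-z)⁻¹
        - f t * ((↑(t*(1-t)):ℂ) * (((t:ℂ)-z)^2)⁻¹)) t := by
    intro t ht
    have htI : t ∈ Set.Icc (0:ℝ) 1 := Set.Ioo_subset_Icc_self ht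
    have hq : HasDerivAt (fun s : ℝ => (↑(s*(1-s)) : ℂ)) ((1:ℂ)-2*(t:ℂ)) t := by
      have hw : HasDerivAt (fun w : ℂ => w*(1-w)) (1*(1-(t:ℂ)) + (t:ℂ)*(0-1)) (t:ℂ) :=
        (hasDerivAt_id _).mul ((hasDerivAt_const _ 1).sub (hasDerivAt_id _))
      have h2 := hw.comp_ofReal
      have h3 : (fun s : ℝ => (↑(s*(1-s)) : ℂ)) = fun s : ℝ => (s:ℂ)*(1-(s:ℂ)) := by
        funext s; push_cast; ring
      rw [h3]
      convert h2 using 1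
      ring
    have hf' : HasDerivAt f (deriv f t) t := (hfdiff t ht).hasDerivAt
    have hprod := hq.mul hf'
    have hinv : HasDerivAt (fun s : ℝ => ((s:ℂ) - z)⁻¹) (-(((t:ℂ)-z)^2)⁻¹) t := by
      have h1 : HasDerivAt (fun w : ℂ => w - z) 1 (t:ℂ) := (hasDerivAt_id _).sub_const z
      have hw := h1.inv (hne t htI)
      have := hw.comp_ofReal
      simpa [neg_div, one_div] using this
    have this : HasDerivAt (fun s : ℝ => (↑(s*(1-s)):ℂ) * f s * ((s:ℂ)-z)⁻¹) _ t := hprod.mul hinv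
    convert this using 1
    simp only [Pi.mul_apply]
    ring
  have hlim0' : Tendsto (fun t : ℝ => (↑(t*(1-t)):ℂ) * f t * ((t:ℂ)-z)⁻¹)
      (nhdsWithin 0 (Set.Ioi 0)) (nhds 0) := by
    have hc : Tendsto (fun t : ℝ => ((t:ℂ) - z)⁻¹) (nhdsWithin 0 (Set.Ioi 0))
        (nhds ((((0:ℝ):ℂ) - z)⁻¹)) :=
      Filter.Tendsto.mono_left ((hcsub.tendsto 0).inv₀ (hne 0 (by norm_num)))
        nhdsWithin_le_nhds
    have := hlim0.mul hc
    simpa using this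
  have hlim1' : Tendsto (fun t : ℝ => (↑(t*(1-t)):ℂ) * f t * ((t:ℂ)-z)⁻¹)
      (nhdsWithin 1 (Set.Iio 1)) (nhds 0) := by
    have hc : Tendsto (fun t : ℝ => ((t:ℂ) - z)⁻¹) (nhdsWithin 1 (Set.Iio 1))
        (nhds ((((1:ℝ):ℂ) - z)⁻¹)) :=
      Filter.Tendsto.mono_left ((hcsub.tendsto 1).inv₀ (hne 1 (by norm_num)))
        nhdsWithin_le_nhds
    have := hlim1.mul hc
    simpa using this
  have hIBP : ∫ t in (0:ℝ)..1, (f t * (((1:ℂ)-2*(t:ℂ)) * ((t:ℂ)-z)⁻¹)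
        + (↑(t*(1-t)):ℂ) * deriv f t * ((t:ℂ)-z)⁻¹
        - f t * ((↑(t*(1-t)):ℂ) * (((t:ℂ)-z)^2)⁻¹)) = 0 := by
    have h := integral_eq_sub_of_hasDerivAt_of_tendsto (by norm_num : (0:ℝ) < 1)
      hgderiv ((hi1.add hi2).sub hi3) hlim0' hlim1'
    simpa using h
  have hsplit : (∫ t in (0:ℝ)..1, f t * ((↑(t*(1-t)):ℂ) * (((t:ℂ)-z)^2)⁻¹))
      = (∫ t in (0:ℝ)..1, f t * (((1:ℂ)-2*(t:ℂ)) * ((t:ℂ)-z)⁻¹))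
        + ∫ t in (0:ℝ)..1, (↑(t*(1-t)):ℂ) * deriv f t * ((t:ℂ)-z)⁻¹ := by
    rw [integral_sub (hi1.add hi2) hi3, integral_add hi1 hi2] at hIBP
    exact (eq_of_sub_eq_zero hIBP).symm
  -- assemble
  rw [stepA.1.deriv, ← intervalIntegral.integral_const_mul]
  have hcA : ContinuousOn (fun t : ℝ => (((t:ℂ)+z-1) * ((t:ℂ)-z)⁻¹)) (Set.uIcc 0 1) := by
    rw [huIcc]
    exact (((Complex.continuous_ofReal.add continuous_const).sub
      continuous_const).continuousOn).mul hcinv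
  have hA : IntervalIntegrable (fun t : ℝ => f t * (((t:ℂ)+z-1) * ((t:ℂ)-z)⁻¹)) volume 0 1 :=
    hfint.mul_continuousOn hcA
  have hcongr : Set.EqOn (fun t : ℝ => z*(1-z) * (f t / ((t:ℂ)-z)^2))
      (fun t : ℝ => f t * (((t:ℂ)+z-1) * ((t:ℂ)-z)⁻¹)
        + f t * ((↑(t*(1-t)):ℂ) * (((t:ℂ)-z)^2)⁻¹)) (Set.uIcc 0 1) := by
    intro t ht
    have h := hne t (huIcc ▸ ht)
    simp only
    push_cast
    field_simp
    ring
  rw [integral_congr hcongr, integral_add hA hi3, hsplit]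
  have hAB : (∫ t in (0:ℝ)..1, f t * (((t:ℂ)+z-1) * ((t:ℂ)-z)⁻¹))
      + (∫ t in (0:ℝ)..1, f t * (((1:ℂ)-2*(t:ℂ)) * ((t:ℂ)-z)⁻¹))
      = -(∫ t in (0:ℝ)..1, f t) := by
    rw [← integral_add hA hi1, ← intervalIntegral.integral_neg]
    apply integral_congr
    intro t ht
    have h := hne t (huIcc ▸ ht)
    simp only
    field_simp
    ring
  have htgt : (∫ t in (0:ℝ)..1, (↑(t*(1-t)):ℂ) * deriv f t * ((t:ℂ)-z)⁻¹)
      = ∫ t in (0:ℝ)..1, (↑(t*(1-t)):ℂ) * deriv f t / ((t:ℂ)-z) := by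
    apply integral_congr
    intro t ht
    simp [div_eq_mul_inv]
  rw [htgt]
  rw [← add_assoc, hAB]
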